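/- (Correctness of the final trend count, Equation 3, supporting Theorem 3.1.) Suppose count : Fin n → ℕ satisfies the trend-count recurrence: for every v : Fin n, count v = (if v ∈ S then 1 else 0) + ∑ over u : Fin n with E u v of count u. Then ∑ over v ∈ F of count v equals the total number of event trends of the query, i.e. it equals Set.ncard {l : List (Fin n) | l ≠ [] ∧ l.Chain' E ∧ (the first element of l belongs to S) ∧ (the last element of l belongs to F)}. -/

import Mathlib

def trends (n : ℕ) (E : Fin n → Fin n → Prop) [DecidableRel E]
    (hE : ∀ u v, E u v → u < v) (S : Finset (Fin n)) (v : Fin n) :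
    Finset (List (Fin n)) :=
  (if v ∈ S then {[v]} else ∅) ∪
    (Finset.univ.filter (fun u => E u v)).attach.biUnion
      (fun u => (trends n E hE S u.1).image (· ++ [v]))
termination_by v.val
decreasing_by
  exact hE u.1 v (Finset.mem_filter.mp u.2).2

theorem mem_trends (n : ℕ) (E : Fin n → Fin n → Prop) [DecidableRel E]
    (hE : ∀ u v, E u v → u < v) (S : Finset (Fin n)) (v : Fin n)
    (l : List (Fin n)) :
    l ∈ trends n E hE S v ↔
      (l ≠ [] ∧ l.Chain' E ∧ (∃ x ∈ S, l.head? = some x) ∧ l.getLast? = some v) := by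
  suffices h : ∀ m : ℕ, ∀ v : Fin n, v.val < m → ∀ l : List (Fin n),
      (l ∈ trends n E hE S v ↔
        (l ≠ [] ∧ l.Chain' E ∧ (∃ x ∈ S, l.head? = some x) ∧ l.getLast? = some v)) from
    h n v v.isLt l
  intro m
  induction m with
  | zero => intro v hv; omega
  | succ m IH =>
  intro v hv l
  have ih : ∀ u : Fin n, u < v → ∀ l : List (Fin n),
      (l ∈ trends n E hE S u ↔
        (l ≠ [] ∧ l.Chain' E ∧ (∃ x ∈ S, l.head? = some x) ∧ l.getLast? = some u)) := by
    intro u hu; exact IH u (by omega)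
  rw [trends]
  simp only [Finset.mem_union, Finset.mem_biUnion, Finset.mem_attach, Finset.mem_image,
    true_and, Subtype.exists, Finset.mem_filter, Finset.mem_univ]
  constructor
  · rintro (h | ⟨u, hEuv, l', hl', rfl⟩)
    · have hvS : v ∈ S := by by_contra hv; simp [hv] at h
      simp only [hvS, if_pos, Finset.mem_singleton] at h
      subst h
      exact ⟨by simp, List.isChain_singleton v, ⟨v, hvS, rfl⟩, rfl⟩
    · obtain ⟨hne, hch, ⟨x, hxS, hx⟩, hlast⟩ := (ih u (hE u v hEuv) l').mp hl'
      refine ⟨by simp, ?_, ⟨x, hxS, ?_⟩, ?_⟩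
      · simp only [List.Chain']
        rw [List.isChain_append]
        refine ⟨hch, List.isChain_singleton v, ?_⟩
        intro a ha b hb
        simp only [List.head?_cons, Option.mem_def, Option.some.injEq] at hb
        rw [hlast] at ha
        simp only [Option.mem_def, Option.some.injEq] at ha
        subst ha; subst hb; exact hEuv
      · cases l' with
        | nil => exact absurd rfl hne
        | cons a t => simpa using hx
      · simp [List.getLast?_concat]
  · rintro ⟨hne, hch, ⟨x, hxS, hx⟩, hlast⟩
    rcases List.eq_nil_or_concat l with rfl | ⟨l', a, rfl⟩
    · exact absurd rfl hne
    · simp only [List.concat_eq_append] at hne hch hlast hx ⊢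
      rw [List.getLast?_concat] at hlast
      obtain rfl : a = v := by simpa using hlast
      rcases eq_or_ne l' [] with rfl | hl'ne
      · left
        obtain rfl : a = x := by simpa using hx
        simp [hxS]
      · right
        simp only [List.Chain'] at hch
        rw [List.isChain_append] at hch
        obtain ⟨hch', -, hrel⟩ := hch
        obtain ⟨u, hu⟩ := List.getLast?_isSome.mpr hl'ne |> Option.isSome_iff_exists.mp
        have hEua : E u a := hrel u hu a (by simp)
        refine ⟨u, hEua, l', ?_, rfl⟩
        refine ((ih u (hE u a hEua)) l').mpr ⟨hl'ne, hch', ⟨x, hxS, ?_⟩, hu⟩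
        cases l' with
        | nil => exact absurd rfl hl'ne
        | cons b t => simpa using hx

theorem card_trends (n : ℕ) (E : Fin n → Fin n → Prop) [DecidableRel E]
    (hE : ∀ u v, E u v → u < v) (S : Finset (Fin n)) (count : Fin n → ℕ)
    (hcount : ∀ v, count v =
      (if v ∈ S then 1 else 0) +
        ∑ u ∈ Finset.univ.filter (fun u => E u v), count u) (v : Fin n) :
    (trends n E hE S v).card = count v := by
  suffices h : ∀ m : ℕ, ∀ v : Fin n, v.val < m → (trends n E hE S v).card = count v from
    h n v v.isLt
  intro m
  induction m with
  | zero => intro v hv; omega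
  | succ m IH =>
  intro v hv
  have ih : ∀ u : Fin n, u < v → (trends n E hE S u).card = count u := by
    intro u hu; exact IH u (by omega)
  rw [trends, hcount v]
  rw [Finset.card_union_of_disjoint]
  · congr 1
    · split <;> simp
    · rw [Finset.card_biUnion]
      · rw [← Finset.sum_attach (Finset.univ.filter (fun u => E u v))
          (fun u => count u)]
        refine Finset.sum_congr rfl ?_
        rintro ⟨u, hu⟩ -
        rw [Finset.card_image_of_injective _ (fun a b h => List.append_cancel_right h)]
        exact ih u (hE u v (Finset.mem_filter.mp hu).2)
      · rintro ⟨u₁, hu₁⟩ - ⟨u₂, hu₂⟩ - hne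
        rw [Function.onFun, Finset.disjoint_left]
        rintro l hl₁ hl₂
        simp only [Finset.mem_image] at hl₁ hl₂
        obtain ⟨l₁, hl₁, rfl⟩ := hl₁
        obtain ⟨l₂, hl₂, heq⟩ := hl₂
        obtain rfl : l₂ = l₁ := List.append_cancel_right heq
        have h1 := ((mem_trends n E hE S u₁ l₂).mp hl₁).2.2.2
        have h2 := ((mem_trends n E hE S u₂ l₂).mp hl₂).2.2.2
        exact hne (Subtype.ext (Option.some_injective _ (h1.symm.trans h2)))
  · rw [Finset.disjoint_left]
    intro l hl hl'
    have hlv : l = [v] := by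
      rcases em (v ∈ S) with h | h <;> simp [h] at hl
      exact hl
    subst hlv
    simp only [Finset.mem_biUnion, Finset.mem_image] at hl'
    obtain ⟨u, -, l', hl', heq⟩ := hl'
    have hne := ((mem_trends n E hE S u.1 l').mp hl').1
    cases l' with
    | nil => exact hne rfl
    | cons a t => simp at heq

theorem final_trend_count_correct
    (n : ℕ) (E : Fin n → Fin n → Prop) [DecidableRel E]
    (hE : ∀ u v, E u v → u < v)
    (S F : Finset (Fin n)) (count : Fin n → ℕ)
    (hcount : ∀ v, count v =
      (if v ∈ S then 1 else 0) +
        ∑ u ∈ Finset.univ.filter (fun u => E u v), count u) :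
    ∑ v ∈ F, count v =
      Set.ncard {l : List (Fin n) |
        l ≠ [] ∧ l.Chain' E ∧ (∃ x ∈ S, l.head? = some x) ∧
          (∃ y ∈ F, l.getLast? = some y)} := by
  have hset : {l : List (Fin n) |
      l ≠ [] ∧ l.Chain' E ∧ (∃ x ∈ S, l.head? = some x) ∧
        (∃ y ∈ F, l.getLast? = some y)} = ↑(F.biUnion (trends n E hE S)) := by
    ext l
    simp only [Set.mem_setOf_eq, Finset.coe_biUnion, Set.mem_iUnion, Finset.mem_coe,
      mem_trends n E hE S]
    tauto
  rw [hset, Set.ncard_coe_finset, Finset.card_biUnion]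
  · exact Finset.sum_congr rfl (fun v _ => (card_trends n E hE S count hcount v).symm)
  · rintro v₁ - v₂ - hne
    rw [Function.onFun, Finset.disjoint_left]
    intro l hl₁ hl₂
    have h1 := ((mem_trends n E hE S v₁ l).mp hl₁).2.2.2
    have h2 := ((mem_trends n E hE S v₂ l).mp hl₂).2.2.2
    rw [h1] at h2
    exact hne (Option.some_injective _ h2)
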